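/- Fix a nonempty finite action set A. For every ε > 0 there exists N such that for every finite state set Ω with |Ω| ≥ N and every interior prior μ₀ on Ω, the share of environments (u_S, u_R) that are felicitous lies within ε of 1/|A|^{|A|}. -/

import Mathlib

open MeasureTheory

namespace KL

/-- `f` is a probability distribution on the finite type `X`. -/
def IsDist {X : Type} [Fintype X] (f : X → ℝ) : Prop :=
  (∀ x, 0 ≤ f x) ∧ ∑ x, f x = 1

/-- `μ₀` is an interior prior on `Ω`. -/
def IsPrior {Ω : Type} [Fintype Ω] (μ₀ : Ω → ℝ) : Prop :=
  (∀ ω, 0 < μ₀ ω) ∧ ∑ ω, μ₀ ω = 1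

variable {Ω A M : Type} [Fintype Ω] [Fintype A] [Fintype M]

/-- A messaging strategy: a distribution over messages in each state. -/
def IsMsg (σ : Ω → M → ℝ) : Prop := ∀ ω, IsDist (σ ω)

/-- An action strategy: a distribution over actions after each message. -/
def IsAct (ρ : M → A → ℝ) : Prop := ∀ m, IsDist (ρ m)

/-- Expected payoff of a profile `(σ, ρ)` for utility `u`. -/
def U (μ₀ : Ω → ℝ) (u : A × Ω → ℝ) (σ : Ω → M → ℝ) (ρ : M → A → ℝ) : ℝ :=
  ∑ ω, ∑ m, ∑ a, μ₀ ω * σ ω m * ρ m a * u (a, ω)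

/-- Sender best response. -/
def SBR (μ₀ : Ω → ℝ) (uS : A × Ω → ℝ) (σ : Ω → M → ℝ) (ρ : M → A → ℝ) : Prop :=
  ∀ σ' : Ω → M → ℝ, IsMsg σ' → U μ₀ uS σ' ρ ≤ U μ₀ uS σ ρ

/-- Receiver best response. -/
def RBR (μ₀ : Ω → ℝ) (uR : A × Ω → ℝ) (σ : Ω → M → ℝ) (ρ : M → A → ℝ) : Prop :=
  ∀ ρ' : M → A → ℝ, IsAct ρ' → U μ₀ uR σ ρ' ≤ U μ₀ uR σ ρ

/-- A cheap-talk equilibrium: a profile of valid strategies that is S-BR and R-BR. -/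
def CTEq (μ₀ : Ω → ℝ) (uS uR : A × Ω → ℝ) (σ : Ω → M → ℝ) (ρ : M → A → ℝ) : Prop :=
  IsMsg σ ∧ IsAct ρ ∧ SBR μ₀ uS σ ρ ∧ RBR μ₀ uR σ ρ

/-- A persuasion profile: a profile of valid strategies that is R-BR. -/
def PersProfile (μ₀ : Ω → ℝ) (uR : A × Ω → ℝ) (σ : Ω → M → ℝ) (ρ : M → A → ℝ) : Prop :=
  IsMsg σ ∧ IsAct ρ ∧ RBR μ₀ uR σ ρ

/-- The cheap-talk payoff: the maximal Sender payoff over cheap-talk equilibria. -/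
noncomputable def ctPayoff (μ₀ : Ω → ℝ) (uS uR : A × Ω → ℝ) : ℝ :=
  sSup {x | ∃ (σ : Ω → M → ℝ) (ρ : M → A → ℝ), CTEq μ₀ uS uR σ ρ ∧ x = U μ₀ uS σ ρ}

/-- The (Bayesian) persuasion payoff: the maximal Sender payoff over persuasion profiles. -/
noncomputable def persPayoff (μ₀ : Ω → ℝ) (uS uR : A × Ω → ℝ) : ℝ :=
  sSup {x | ∃ (σ : Ω → M → ℝ) (ρ : M → A → ℝ), PersProfile μ₀ uR σ ρ ∧ x = U μ₀ uS σ ρ}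

/-- A messaging strategy is partitional if it is deterministic in every state. -/
def Partitional (σ : Ω → M → ℝ) : Prop := ∀ ω, ∃ m, σ ω m = 1

/-- The partitional persuasion payoff. -/
noncomputable def partPersPayoff (μ₀ : Ω → ℝ) (uS uR : A × Ω → ℝ) : ℝ :=
  sSup {x | ∃ (σ : Ω → M → ℝ) (ρ : M → A → ℝ),
    Partitional σ ∧ PersProfile μ₀ uR σ ρ ∧ x = U μ₀ uS σ ρ}

/-- The partitional cheap-talk payoff. -/
noncomputable def partCtPayoff (μ₀ : Ω → ℝ) (uS uR : A × Ω → ℝ) : ℝ :=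
  sSup {x | ∃ (σ : Ω → M → ℝ) (ρ : M → A → ℝ),
    Partitional σ ∧ CTEq μ₀ uS uR σ ρ ∧ x = U μ₀ uS σ ρ}

/-- A message is on-path if it is sent with positive probability in some state. -/
def OnPath (σ : Ω → M → ℝ) (m : M) : Prop := ∃ ω, 0 < σ ω m

/-- A pure action strategy: degenerate after every message. -/
def IsPureAct (ρ : M → A → ℝ) : Prop := ∀ m, ∃ a, ρ m a = 1

/-- A pure-on-path action strategy: degenerate after every on-path message. -/
def PureOnPath (σ : Ω → M → ℝ) (ρ : M → A → ℝ) : Prop :=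
  ∀ m, OnPath σ m → ∃ a, ρ m a = 1

/-- The posterior belief induced by message `m`. -/
noncomputable def post (μ₀ : Ω → ℝ) (σ : Ω → M → ℝ) (m : M) (ω : Ω) : ℝ :=
  μ₀ ω * σ ω m / ∑ ω', μ₀ ω' * σ ω' m

/-- The cube of environments `[0,1]^(2|A||Ω|)`. -/
def EnvCube (Ω A : Type) : Set ((A × Ω → ℝ) × (A × Ω → ℝ)) :=
  {e | (∀ p, e.1 p ∈ Set.Icc (0 : ℝ) 1) ∧ ∀ p, e.2 p ∈ Set.Icc (0 : ℝ) 1}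

/-- The cube of transparent environments `[0,1]^(|A|(|Ω|+1))`, points `(v, u_R)`. -/
def TransCube (Ω A : Type) : Set ((A → ℝ) × (A × Ω → ℝ)) :=
  {e | (∀ a, e.1 a ∈ Set.Icc (0 : ℝ) 1) ∧ ∀ p, e.2 p ∈ Set.Icc (0 : ℝ) 1}

open Classical in
/-- The expanded-indifference matrix `T^i`: rows `u_S(a_j,·) − u_S(a_i,·)` for `j ≠ i`,
rows `u_R(a_j,·) − u_R(a_i,·)` for `j ≠ i`, and the rows of the identity matrix. -/
noncomputable def TMat (uS uR : A × Ω → ℝ) (i : A) :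
    Matrix (({j : A // j ≠ i} ⊕ {j : A // j ≠ i}) ⊕ Ω) Ω ℝ :=
  Matrix.of fun r ω =>
    match r with
    | Sum.inl (Sum.inl j) => uS (j.1, ω) - uS (i, ω)
    | Sum.inl (Sum.inr j) => uR (j.1, ω) - uR (i, ω)
    | Sum.inr ω' => if ω' = ω then 1 else 0

/-- Scant indifferences: every row-submatrix of every expanded-indifference matrix has
full rank (rank equal to the minimum of the number of rows and the number of columns). -/
def ScantIndiff (uS uR : A × Ω → ℝ) : Prop :=
  ∀ i : A, ∀ s : Finset (({j : A // j ≠ i} ⊕ {j : A // j ≠ i}) ⊕ Ω),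
    ((TMat uS uR i).submatrix (fun r : {x // x ∈ s} => r.1) id).rank
      = min s.card (Fintype.card Ω)

open Classical in
/-- The set `Ω_a` of states in which `a` is an ideal action for Sender. -/
noncomputable def idealStates (uS : A × Ω → ℝ) (a : A) : Finset Ω :=
  Finset.univ.filter fun ω => ∀ b, uS (b, ω) ≤ uS (a, ω)

/-- Felicitous environment. -/
def Felicitous (μ₀ : Ω → ℝ) (uS uR : A × Ω → ℝ) : Prop :=
  ∀ a a' : A, 0 ≤ ∑ ω ∈ idealStates uS a, μ₀ ω * (uR (a, ω) - uR (a', ω))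

/-- Partitional-unique-response: for every nonempty subset of states, Receiver's
expected payoff has a unique maximizer. -/
def PUR (μ₀ : Ω → ℝ) (uR : A × Ω → ℝ) : Prop :=
  ∀ S : Finset Ω, S.Nonempty →
    ∃! a : A, ∀ b : A, ∑ ω ∈ S, μ₀ ω * uR (b, ω) ≤ ∑ ω ∈ S, μ₀ ω * uR (a, ω)

/-- Jointly-inclusive environment: each action is the unique ideal action of both
players in some state. -/
def JointlyInclusive (uS uR : A × Ω → ℝ) : Prop :=
  ∀ a : A, ∃ ω : Ω,
    (∀ b, b ≠ a → uS (b, ω) < uS (a, ω)) ∧ ∀ b, b ≠ a → uR (b, ω) < uR (a, ω)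

/-! ### Auxiliary material for `share_felicitous_limit` -/

section FelicitousAux

open Set
open scoped ENNReal

/-- The unit cube in `ι → ℝ`. -/
def kube (ι : Type) : Set (ι → ℝ) := Set.pi Set.univ fun _ => Set.Icc (0:ℝ) 1

lemma measurableSet_kube {ι : Type} [Fintype ι] : MeasurableSet (kube ι) :=
  MeasurableSet.univ_pi fun _ => measurableSet_Icc

lemma volume_kube {ι : Type} [Fintype ι] : volume (kube ι) = 1 := by
  rw [kube, volume_pi_pi]; simp [Real.volume_Icc]

lemma mem_kube {ι : Type} {x : ι → ℝ} : x ∈ kube ι ↔ ∀ i, x i ∈ Set.Icc (0:ℝ) 1 := by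
  simp [kube, Pi.le_def]; exact forall_and.symm

lemma mp_comp_equiv {ι ι' : Type} [Fintype ι] [Fintype ι'] (e : ι ≃ ι') :
    MeasurePreserving (fun x : ι' → ℝ => x ∘ e) volume volume := by
  have h := MeasureTheory.volume_preserving_arrowCongr' (β₁ := ℝ) (β₂ := ℝ) e.symm
    (MeasurableEquiv.refl ℝ) (MeasurePreserving.id _)
  convert h using 1 <;> rfl

lemma mp_uncurry {κ : Type} [Fintype κ] (β : κ → Type) [∀ k, Fintype (β k)] :
    MeasurePreserving (Sigma.uncurry : (∀ k, β k → ℝ) → ((Σ k, β k) → ℝ)) volume volume := by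
  constructor
  · exact measurable_pi_lambda _ fun p => (measurable_pi_apply p.2).comp (measurable_pi_apply p.1)
  · have hv : (volume : Measure ((Σ k, β k) → ℝ)) = Measure.pi fun _ => volume := volume_pi
    rw [hv]
    refine (Measure.pi_eq (μ := fun _ : Σ k, β k => (volume : Measure ℝ)) fun s hs => ?_).symm
    have hpre : (Sigma.uncurry : (∀ k, β k → ℝ) → ((Σ k, β k) → ℝ)) ⁻¹' (Set.pi Set.univ s)
        = Set.pi Set.univ (fun k => Set.pi Set.univ (fun j => s ⟨k, j⟩)) := by
      ext g
      simp [Sigma.uncurry, Set.mem_pi, Sigma.forall]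
    rw [Measure.map_apply
        (measurable_pi_lambda _ fun p => (measurable_pi_apply p.2).comp (measurable_pi_apply p.1))
        (MeasurableSet.univ_pi fun _ => hs _), hpre]
    rw [volume_pi_pi]
    simp_rw [volume_pi_pi]
    rw [← Finset.univ_sigma_univ, Finset.prod_sigma]

/-- Block independence for the product (pi) volume. -/
lemma vol_iInter_blocks {ι κ : Type} [Fintype ι] [Fintype κ] (β : κ → Type)
    [∀ k, Fintype (β k)] (e : (Σ k, β k) ≃ ι) (F : ∀ k, Set (β k → ℝ))
    (hF : ∀ k, MeasurableSet (F k)) :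
    volume (⋂ k, {x : ι → ℝ | (fun j => x (e ⟨k, j⟩)) ∈ F k}) = ∏ k, volume (F k) := by
  have hmcurry : ∀ k, Measurable fun (y : (Σ k, β k) → ℝ) (j : β k) => y ⟨k, j⟩ :=
    fun k => measurable_pi_lambda _ fun j => measurable_pi_apply _
  set W' : Set ((Σ k, β k) → ℝ) := ⋂ k, (fun (y : (Σ k, β k) → ℝ) (j : β k) => y ⟨k, j⟩) ⁻¹' F k
    with hW'
  have hW'm : MeasurableSet W' := MeasurableSet.iInter fun k => (hmcurry k) (hF k)
  have h1 : (⋂ k, {x : ι → ℝ | (fun j => x (e ⟨k, j⟩)) ∈ F k})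
      = (fun x : ι → ℝ => x ∘ e) ⁻¹' W' := by
    ext x; simp [hW']
  rw [h1, (mp_comp_equiv e).measure_preimage hW'm.nullMeasurableSet]
  have h2 : (Sigma.uncurry : (∀ k, β k → ℝ) → ((Σ k, β k) → ℝ)) ⁻¹' W'
      = Set.pi Set.univ F := by
    ext g; simp [hW', Sigma.uncurry, Set.mem_pi]
  rw [← (mp_uncurry β).measure_preimage hW'm.nullMeasurableSet, h2, volume_pi_pi]

/-- A proper linear kernel is null. -/
lemma null_ker {ι : Type} [Fintype ι] (L : (ι → ℝ) →ₗ[ℝ] ℝ) (hL : L ≠ 0) :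
    volume {x : ι → ℝ | L x = 0} = 0 := by
  have h : {x : ι → ℝ | L x = 0} = (LinearMap.ker L : Set (ι → ℝ)) := by
    ext x; simp [LinearMap.mem_ker]
  rw [h]
  refine Measure.addHaar_submodule volume _ ?_
  simpa [LinearMap.ker_eq_top] using hL

/-- The probability that a fixed action maximizes a weighted sum of iid uniforms. -/
lemma argmax_vol {A ι : Type} [Fintype A] [Nonempty A] [Fintype ι] [Nonempty ι]
    (w : ι → ℝ) (hw : ∀ i, 0 < w i) (b : A) :
    volume (kube (A × ι) ∩ {v | ∀ c : A, ∑ i, w i * v (c, i) ≤ ∑ i, w i * v (b, i)})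
      = (Fintype.card A : ℝ≥0∞)⁻¹ := by
  classical
  set X : A → (A × ι → ℝ) → ℝ := fun c v => ∑ i, w i * v (c, i) with hX
  have hXm : ∀ c, Measurable (X c) := fun c =>
    Finset.measurable_sum _ fun i _ => (measurable_pi_apply (c, i)).const_mul _
  set E : A → Set (A × ι → ℝ) := fun c => kube (A × ι) ∩ {v | ∀ d, X d v ≤ X c v} with hE
  have hEm : ∀ c, MeasurableSet (E c) := by
    intro c
    refine measurableSet_kube.inter ?_
    rw [Set.setOf_forall]
    exact MeasurableSet.iInter fun d => measurableSet_le (hXm d) (hXm c)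
  set N : Set (A × ι → ℝ) := ⋃ p : A × A, {v | p.1 ≠ p.2 ∧ X p.1 v = X p.2 v} with hN
  have hNm : MeasurableSet N := by
    refine MeasurableSet.iUnion fun p => ?_
    rcases eq_or_ne p.1 p.2 with h | h
    · convert MeasurableSet.empty
      ext v; simp [h]
    · have : {v : A × ι → ℝ | p.1 ≠ p.2 ∧ X p.1 v = X p.2 v} = {v | X p.1 v = X p.2 v} := by
        ext v; simp [h]
      rw [this]
      exact measurableSet_eq_fun (hXm p.1) (hXm p.2)
  have hNnull : volume N = 0 := by
    refine measure_iUnion_null fun p => ?_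
    rcases eq_or_ne p.1 p.2 with h | h
    · convert measure_empty
      · ext v; simp [h]
      · infer_instance
    · obtain ⟨i0⟩ := (inferInstance : Nonempty ι)
      set L : ((A × ι) → ℝ) →ₗ[ℝ] ℝ :=
        ∑ i : ι, w i • ((LinearMap.proj (p.1, i) : ((A × ι) → ℝ) →ₗ[ℝ] ℝ)
          - LinearMap.proj (p.2, i)) with hLdef
      have hLapp : ∀ v, L v = X p.1 v - X p.2 v := by
        intro v
        simp [hLdef, hX, LinearMap.sum_apply, Finset.sum_sub_distrib, mul_sub]
      have hLne : L ≠ 0 := by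
        intro h0
        have h1 := hLapp (fun q => if q = (p.1, i0) then 1 else 0)
        rw [h0] at h1
        have h2 : X p.1 (fun q => if q = (p.1, i0) then (1:ℝ) else 0) = w i0 := by
          simp only [hX, Prod.mk.injEq, true_and, mul_ite, mul_one, mul_zero]
          simp [Finset.sum_ite_eq']
        have h3 : X p.2 (fun q => if q = (p.1, i0) then (1:ℝ) else 0) = 0 := by
          simp only [hX]
          refine Finset.sum_eq_zero fun i _ => ?_
          rw [if_neg (by simp [Prod.ext_iff, h.symm]), mul_zero]
        rw [h2, h3, sub_zero] at h1
        simp at h1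
        exact (hw i0).ne' h1.symm
      refine measure_mono_null ?_ (null_ker L hLne)
      intro v hv
      simp only [Set.mem_setOf_eq] at hv ⊢
      rw [hLapp, hv.2, sub_self]
  have hvolEq : ∀ c d : A, volume (E c) = volume (E d) := by
    intro c d
    set σ := Equiv.swap c d with hσ
    set eP : A × ι ≃ A × ι := Equiv.prodCongr σ (Equiv.refl ι) with heP
    have hXcomp : ∀ (d' : A) (v : A × ι → ℝ), X d' (v ∘ eP) = X (σ d') v := fun _ _ => rfl
    have hpre : (fun v : A × ι → ℝ => v ∘ eP) ⁻¹' E c = E d := by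
      ext v
      simp only [hE, Set.mem_preimage, Set.mem_inter_iff, Set.mem_setOf_eq]
      have hk : v ∘ eP ∈ kube (A × ι) ↔ v ∈ kube (A × ι) := by
        rw [mem_kube, mem_kube]
        constructor
        · intro hq q
          have := hq (eP.symm q)
          simpa using this
        · intro hq q
          exact hq _
      rw [hk]
      have hiff : (∀ d', X d' (v ∘ eP) ≤ X c (v ∘ eP)) ↔ ∀ d', X d' v ≤ X d v := by
        constructor
        · intro h d'
          have := h (σ.symm d')
          rwa [hXcomp, hXcomp, Equiv.apply_symm_apply, hσ, Equiv.swap_apply_left] at this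
        · intro h d'
          rw [hXcomp, hXcomp, hσ, Equiv.swap_apply_left]
          exact h _
      rw [hiff]
    have := (mp_comp_equiv eP).measure_preimage (hEm c).nullMeasurableSet
    rw [hpre] at this
    exact this.symm
  have hcover : kube (A × ι) \ N = ⋃ c, (E c \ N) := by
    ext v
    constructor
    · rintro ⟨hv, hvN⟩
      obtain ⟨c, -, hc⟩ := Finset.exists_max_image Finset.univ (fun c => X c v)
        ⟨Classical.arbitrary A, Finset.mem_univ _⟩
      exact Set.mem_iUnion.mpr ⟨c, ⟨⟨hv, fun d => hc d (Finset.mem_univ d)⟩, hvN⟩⟩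
    · intro hv
      obtain ⟨c, hc⟩ := Set.mem_iUnion.mp hv
      exact ⟨hc.1.1, hc.2⟩
  have hdisj : Pairwise (Function.onFun Disjoint fun c => E c \ N) := by
    intro c d hcd
    rw [Function.onFun, Set.disjoint_left]
    rintro v ⟨⟨-, hc⟩, hvN⟩ ⟨⟨-, hd⟩, -⟩
    exact hvN (Set.mem_iUnion.mpr ⟨(c, d), hcd, le_antisymm (hd c) (hc d)⟩)
  have hsum : ∑' c : A, volume (E c \ N) = 1 := by
    rw [← measure_iUnion hdisj fun c => (hEm c).diff hNm, ← hcover,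
      measure_diff_null hNnull, volume_kube]
  rw [tsum_fintype] at hsum
  have hsame : ∀ c, volume (E c \ N) = volume (E b) := fun c => by
    rw [measure_diff_null hNnull]; exact hvolEq c b
  rw [Finset.sum_congr rfl fun c _ => hsame c, Finset.sum_const, Finset.card_univ,
    nsmul_eq_mul] at hsum
  exact ENNReal.eq_inv_of_mul_eq_one_left (by rw [mul_comm]; exact hsum)

variable {Ω A : Type} [Fintype Ω] [Fintype A]

/-- Reindexing `A × Ω` along the fibers of a labeling `s`. -/
def fiberEquiv (s : Ω → A) : (Σ a : A, A × {ω : Ω // s ω = a}) ≃ A × Ω where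
  toFun q := (q.2.1, q.2.2.1)
  invFun p := ⟨s p.2, (p.1, ⟨p.2, rfl⟩)⟩
  left_inv := by rintro ⟨a, b, ω, rfl⟩; rfl
  right_inv := by rintro ⟨b, ω⟩; rfl

lemma fiberEquiv_apply (s : Ω → A) (a b : A) (ω : {ω : Ω // s ω = a}) :
    fiberEquiv s ⟨a, (b, ω)⟩ = (b, ω.1) := rfl

/-- Reindexing `A × Ω` by states. -/
def missEquiv (Ω A : Type) : (Σ _ω : Ω, A × PUnit) ≃ A × Ω where
  toFun q := (q.2.1, q.1)
  invFun p := ⟨p.2, (p.1, PUnit.unit)⟩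
  left_inv := by rintro ⟨ω, b, ⟨⟩⟩; rfl
  right_inv := by rintro ⟨b, ω⟩; rfl

lemma missEquiv_apply (b : A) (ω : Ω) (j : PUnit) :
    missEquiv Ω A ⟨ω, (b, j)⟩ = (b, ω) := rfl

/-- The cell of Sender utilities whose strict-argmax labeling is `s`. -/
def CS (s : Ω → A) : Set (A × Ω → ℝ) :=
  kube (A × Ω) ∩ {u | ∀ ω b, b ≠ s ω → u (b, ω) < u (s ω, ω)}

open Classical in
/-- The Receiver utilities that are felicitous for the labeling `s`. -/
def RS (μ₀ : Ω → ℝ) (s : Ω → A) : Set (A × Ω → ℝ) :=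
  kube (A × Ω) ∩ {u | ∀ a a' : A,
    ∑ ω, (if s ω = a then μ₀ ω * u (a', ω) else 0)
      ≤ ∑ ω, (if s ω = a then μ₀ ω * u (a, ω) else 0)}

lemma measurableSet_CS (s : Ω → A) : MeasurableSet (CS s) := by
  refine measurableSet_kube.inter ?_
  rw [Set.setOf_forall]
  refine MeasurableSet.iInter fun ω => ?_
  rw [Set.setOf_forall]
  refine MeasurableSet.iInter fun b => ?_
  by_cases h : b = s ω
  · convert MeasurableSet.univ
    ext u; simp [h]
  · have he : {u : A × Ω → ℝ | b ≠ s ω → u (b, ω) < u (s ω, ω)}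
        = {u | u (b, ω) < u (s ω, ω)} := by
      ext u; simp [h]
    rw [he]
    exact measurableSet_lt (measurable_pi_apply _) (measurable_pi_apply _)

open Classical in
lemma measurableSet_RS (μ₀ : Ω → ℝ) (s : Ω → A) : MeasurableSet (RS μ₀ s) := by
  refine measurableSet_kube.inter ?_
  rw [Set.setOf_forall]
  refine MeasurableSet.iInter fun a => ?_
  rw [Set.setOf_forall]
  refine MeasurableSet.iInter fun a' => ?_
  have hm : ∀ c : A, Measurable fun u : A × Ω → ℝ =>
      ∑ ω, (if s ω = a then μ₀ ω * u (c, ω) else 0) := by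
    intro c
    refine Finset.measurable_sum _ fun ω _ => ?_
    by_cases h : s ω = a
    · simp only [h, if_true]
      exact (measurable_pi_apply _).const_mul _
    · simp only [h, if_false]
      exact measurable_const
  exact measurableSet_le (hm a') (hm a)

open Classical in
lemma sum_fiber (s : Ω → A) (a : A) (g : Ω → ℝ) :
    ∑ j : {ω : Ω // s ω = a}, g j.1 = ∑ ω, (if s ω = a then g ω else 0) := by
  rw [← Finset.sum_filter]
  exact (Finset.sum_subtype _ (fun ω => by simp) g).symm

open Classical in
lemma vol_RS [Nonempty A] (μ₀ : Ω → ℝ) (hμ : ∀ ω, 0 < μ₀ ω) (s : Ω → A) :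
    volume (RS μ₀ s) = ((Fintype.card A : ℝ≥0∞)⁻¹) ^ (Finset.univ.image s).card := by
  classical
  set F : ∀ a : A, Set ((A × {ω : Ω // s ω = a}) → ℝ) := fun a => kube _ ∩
    {v | ∀ c : A, ∑ j : {ω : Ω // s ω = a}, μ₀ j.1 * v (c, j)
      ≤ ∑ j : {ω : Ω // s ω = a}, μ₀ j.1 * v (a, j)} with hF
  have hFm : ∀ a, MeasurableSet (F a) := by
    intro a
    refine measurableSet_kube.inter ?_
    rw [Set.setOf_forall]
    exact MeasurableSet.iInter fun c => measurableSet_le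
      (Finset.measurable_sum _ fun j _ => by fun_prop)
      (Finset.measurable_sum _ fun j _ => by fun_prop)
  have hset : RS μ₀ s
      = ⋂ a, {x : A × Ω → ℝ | (fun j : A × {ω : Ω // s ω = a} => x (fiberEquiv s ⟨a, j⟩)) ∈ F a} := by
    ext u
    simp only [RS, Set.mem_inter_iff, Set.mem_iInter, Set.mem_setOf_eq, hF, mem_kube]
    constructor
    · rintro ⟨hk, hin⟩ a
      refine ⟨fun j => hk _, fun c => ?_⟩
      simp only [fiberEquiv_apply]
      rw [sum_fiber s a fun ω => μ₀ ω * u (c, ω), sum_fiber s a fun ω => μ₀ ω * u (a, ω)]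
      exact hin a c
    · intro h
      constructor
      · intro p
        exact (h (s p.2)).1 (p.1, ⟨p.2, rfl⟩)
      · intro a c
        have h9 := (h a).2 c
        simp only [fiberEquiv_apply] at h9
        rwa [sum_fiber s a fun ω => μ₀ ω * u (c, ω),
          sum_fiber s a fun ω => μ₀ ω * u (a, ω)] at h9
  rw [hset, vol_iInter_blocks (fun a : A => A × {ω : Ω // s ω = a}) (fiberEquiv s) F hFm]
  have hval : ∀ a, volume (F a)
      = if a ∈ Finset.univ.image s then (Fintype.card A : ℝ≥0∞)⁻¹ else 1 := by
    intro a
    by_cases h : a ∈ Finset.univ.image s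
    · haveI : Nonempty {ω : Ω // s ω = a} := by
        obtain ⟨ω, -, hω⟩ := Finset.mem_image.mp h
        exact ⟨⟨ω, hω⟩⟩
      rw [if_pos h]
      exact argmax_vol (fun j : {ω : Ω // s ω = a} => μ₀ j.1) (fun j => hμ j.1) a
    · haveI : IsEmpty {ω : Ω // s ω = a} :=
        ⟨fun j => h (Finset.mem_image.mpr ⟨j.1, Finset.mem_univ _, j.2⟩)⟩
      rw [if_neg h]
      have hFa : F a = kube (A × {ω : Ω // s ω = a}) := by
        rw [hF]
        simp [Finset.univ_eq_empty]
      rw [hFa, volume_kube]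
  rw [Finset.prod_congr rfl fun a _ => hval a, ← Finset.prod_filter,
    Finset.filter_univ_mem, Finset.prod_const]

/-- The set of Sender utilities with a tie somewhere. -/
def TieS (Ω A : Type) : Set (A × Ω → ℝ) :=
  ⋃ t : Ω × A × A, {u | t.2.1 ≠ t.2.2 ∧ u (t.2.1, t.1) = u (t.2.2, t.1)}

lemma tieS_null : volume (TieS Ω A) = 0 := by
  classical
  refine measure_iUnion_null fun t => ?_
  obtain ⟨ω, b, c⟩ := t
  rcases eq_or_ne b c with h | h
  · convert measure_empty
    · ext u; simp [h]
    · infer_instance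
  · set L : ((A × Ω) → ℝ) →ₗ[ℝ] ℝ :=
      (LinearMap.proj (b, ω) : ((A × Ω) → ℝ) →ₗ[ℝ] ℝ) - LinearMap.proj (c, ω) with hL
    have hLapp : ∀ u : (A × Ω) → ℝ, L u = u (b, ω) - u (c, ω) := fun u => rfl
    have hLne : L ≠ 0 := by
      intro h0
      have h1 : L (fun q => if q = (b, ω) then 1 else 0) = 0 := by rw [h0]; rfl
      rw [hLapp] at h1
      rw [if_pos rfl, if_neg (by simp [Prod.ext_iff, h.symm]), sub_zero] at h1
      exact one_ne_zero h1
    refine measure_mono_null ?_ (null_ker L hLne)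
    rintro u ⟨-, hu⟩
    simp only [Set.mem_setOf_eq, hLapp, hu, sub_self]

lemma CS_disjoint {s s' : Ω → A} (h : s ≠ s') : Disjoint (CS s) (CS s') := by
  rw [Set.disjoint_left]
  rintro u ⟨-, hu⟩ ⟨-, hu'⟩
  obtain ⟨ω, hω⟩ := Function.ne_iff.mp h
  exact lt_asymm (hu ω (s' ω) (Ne.symm hω)) (hu' ω (s ω) hω)

lemma kube_diff_tieS_subset [Nonempty A] :
    kube (A × Ω) \ TieS Ω A ⊆ ⋃ s : Ω → A, CS s := by
  rintro u ⟨hu, hut⟩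
  have hch : ∀ ω : Ω, ∃ a : A, ∀ b : A, u (b, ω) ≤ u (a, ω) := by
    intro ω
    obtain ⟨a, -, ha⟩ := Finset.exists_max_image Finset.univ (fun b => u (b, ω))
      ⟨Classical.arbitrary A, Finset.mem_univ _⟩
    exact ⟨a, fun b => ha b (Finset.mem_univ b)⟩
  choose s hs using hch
  refine Set.mem_iUnion.mpr ⟨s, hu, ?_⟩
  intro ω b hb
  refine lt_of_le_of_ne (hs ω b) fun heq => ?_
  exact hut (Set.mem_iUnion.mpr ⟨(ω, b, s ω), hb, heq⟩)

lemma mem_idealStates_of_CS {s : Ω → A} {u : A × Ω → ℝ} (hu : u ∈ CS s) (a : A) (ω : Ω) :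
    ω ∈ idealStates u a ↔ s ω = a := by
  classical
  simp only [idealStates, Finset.mem_filter, Finset.mem_univ, true_and]
  constructor
  · intro h1
    by_contra hne
    have h2 := hu.2 ω a fun hh => hne hh.symm
    exact absurd (h1 (s ω)) (not_le.mpr h2)
  · rintro rfl
    intro b
    rcases eq_or_ne b (s ω) with rfl | hb
    · exact le_refl _
    · exact (hu.2 ω b hb).le

open Classical in
lemma fel_sum_eq {s : Ω → A} {u : A × Ω → ℝ} (hu : u ∈ CS s) (μ₀ : Ω → ℝ) (uR : A × Ω → ℝ)
    (a a' : A) :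
    ∑ ω ∈ idealStates u a, μ₀ ω * (uR (a, ω) - uR (a', ω))
      = ∑ ω, (if s ω = a then μ₀ ω * uR (a, ω) else 0)
        - ∑ ω, (if s ω = a then μ₀ ω * uR (a', ω) else 0) := by
  have h1 : idealStates u a = Finset.univ.filter fun ω => s ω = a := by
    ext ω
    rw [mem_idealStates_of_CS hu a ω]
    simp
  rw [h1, Finset.sum_filter, ← Finset.sum_sub_distrib]
  refine Finset.sum_congr rfl fun ω _ => ?_
  by_cases h : s ω = a <;> simp [h, mul_sub]

open Classical in
lemma vol_miss_le [Nonempty A] (a : A) :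
    volume (⋃ s ∈ {s : Ω → A | ∀ ω, s ω ≠ a}, CS s)
      ≤ (1 - (Fintype.card A : ℝ≥0∞)⁻¹) ^ (Fintype.card Ω) := by
  classical
  set G : Set ((A × PUnit) → ℝ) :=
    kube (A × PUnit) ∩ {v | ∀ c : A, ∑ i : PUnit, (1:ℝ) * v (c, i)
      ≤ ∑ i : PUnit, (1:ℝ) * v (a, i)} with hG
  have hGm : MeasurableSet G := by
    refine measurableSet_kube.inter ?_
    rw [Set.setOf_forall]
    exact MeasurableSet.iInter fun c => measurableSet_le
      (Finset.measurable_sum _ fun i _ =>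
        Measurable.const_mul (measurable_pi_apply ((c, i) : A × PUnit)) 1)
      (Finset.measurable_sum _ fun i _ =>
        Measurable.const_mul (measurable_pi_apply ((a, i) : A × PUnit)) 1)
  have hGvol : volume G = (Fintype.card A : ℝ≥0∞)⁻¹ :=
    argmax_vol (fun _ : PUnit => (1:ℝ)) (fun _ => one_pos) a
  set Fm : Set ((A × PUnit) → ℝ) := kube (A × PUnit) \ G with hFmdef
  have hFm_m : MeasurableSet Fm := measurableSet_kube.diff hGm
  have hFvol : volume Fm = 1 - (Fintype.card A : ℝ≥0∞)⁻¹ := by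
    rw [hFmdef, measure_diff (Set.inter_subset_left) hGm.nullMeasurableSet
      (by rw [hGvol]; exact ENNReal.inv_ne_top.mpr (by
        exact_mod_cast Fintype.card_ne_zero)), volume_kube, hGvol]
  have hD : volume (⋂ ω : Ω, {x : A × Ω → ℝ |
      (fun j : A × PUnit => x (missEquiv Ω A ⟨ω, j⟩)) ∈ Fm})
      = (1 - (Fintype.card A : ℝ≥0∞)⁻¹) ^ (Fintype.card Ω) := by
    rw [vol_iInter_blocks (fun _ : Ω => A × PUnit) (missEquiv Ω A) (fun _ => Fm)
      (fun _ => hFm_m), Finset.prod_const, Finset.card_univ, hFvol]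
  refine le_trans (measure_mono ?_) hD.le
  refine Set.iUnion₂_subset fun s hs => ?_
  rintro u ⟨hk, hu⟩
  refine Set.mem_iInter.mpr fun ω => ?_
  refine ⟨mem_kube.mpr fun j => (mem_kube.mp hk) _, ?_⟩
  rintro ⟨-, hmax⟩
  have h1 : u (s ω, ω) ≤ u (a, ω) := by
    have h8 := hmax (s ω)
    simpa [missEquiv_apply] using h8
  have h2 : u (a, ω) < u (s ω, ω) := hu ω a (Ne.symm (hs ω))
  exact absurd h1 (not_le.mpr h2)

end FelicitousAux

/-- Lemma (Kamenica–Lin): as `|Ω| → ∞`, the share of felicitous environments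
converges to `1/|A|^|A|`. -/
theorem share_felicitous_limit
    (A : Type) [Fintype A] [Nonempty A] :
    ∀ ε : ℝ, 0 < ε → ∃ N : ℕ,
      ∀ (Ω : Type) [Fintype Ω] [Nonempty Ω], N ≤ Fintype.card Ω →
      ∀ μ₀ : Ω → ℝ, IsPrior μ₀ →
        |(volume (EnvCube Ω A ∩ {e | Felicitous μ₀ e.1 e.2})).toReal
          - 1 / (Fintype.card A : ℝ) ^ Fintype.card A| ≤ ε := by
  intro ε hε
  have hcA0 : (0:ℝ) < (Fintype.card A : ℝ) := by exact_mod_cast Fintype.card_pos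
  have hcA1 : (1:ℝ) ≤ (Fintype.card A : ℝ) := by exact_mod_cast Fintype.card_pos
  set r : ℝ := 1 - (Fintype.card A : ℝ)⁻¹ with hrdef
  have hr0 : 0 ≤ r := by
    rw [hrdef, sub_nonneg]
    exact inv_le_one_of_one_le₀ hcA1
  have hr1 : r < 1 := by
    have : 0 < (Fintype.card A : ℝ)⁻¹ := inv_pos.mpr hcA0
    rw [hrdef]
    linarith
  have htend : Filter.Tendsto (fun k : ℕ => (Fintype.card A : ℝ) * r ^ k)
      Filter.atTop (nhds 0) := by
    have h := tendsto_pow_atTop_nhds_zero_of_lt_one hr0 hr1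
    simpa using h.const_mul (Fintype.card A : ℝ)
  obtain ⟨N, hN⟩ := (Metric.tendsto_atTop.mp htend) ε hε
  have hNval : (Fintype.card A : ℝ) * r ^ N ≤ ε := by
    have h := hN N le_rfl
    rw [Real.dist_eq, sub_zero] at h
    exact (le_abs_self _).trans h.le
  refine ⟨N, ?_⟩
  intro Ω _ _ hcard μ₀ hμ₀
  classical
  set cA : ENNReal := (Fintype.card A : ENNReal) with hcAdef
  have hcA_netop : cA ≠ ⊤ := by simp [hcAdef]
  have hinv_le1 : cA⁻¹ ≤ 1 := by
    rw [ENNReal.inv_le_one, hcAdef]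
    exact_mod_cast Nat.one_le_iff_ne_zero.mpr Fintype.card_ne_zero
  set κ : ENNReal := cA⁻¹ ^ Fintype.card A with hκdef
  have hκle1 : κ ≤ 1 := pow_le_one' hinv_le1 _
  set V := volume (EnvCube Ω A ∩ {e | Felicitous μ₀ e.1 e.2}) with hVdef
  have hGvol : volume (⋃ s : Ω → A, (CS s) ×ˢ (RS μ₀ s))
      = ∑ s : Ω → A, volume (CS s) * volume (RS μ₀ s) := by
    rw [measure_iUnion ?_ fun s => (measurableSet_CS s).prod (measurableSet_RS μ₀ s)]
    · rw [tsum_fintype]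
      exact Finset.sum_congr rfl fun s _ => by
        rw [Measure.volume_eq_prod, Measure.prod_prod]
    · intro s s' hss'
      rw [Function.onFun, Set.disjoint_left]
      rintro ⟨u, v⟩ hm1 hm2
      exact Set.disjoint_left.mp (CS_disjoint hss') hm1.1 hm2.1
  have hGsub : (⋃ s : Ω → A, (CS s) ×ˢ (RS μ₀ s))
      ⊆ EnvCube Ω A ∩ {e | Felicitous μ₀ e.1 e.2} := by
    rintro ⟨u, v⟩ huv
    obtain ⟨s, hu, hv⟩ := Set.mem_iUnion.mp huv
    refine ⟨⟨fun p => mem_kube.mp hu.1 p, fun p => mem_kube.mp hv.1 p⟩, ?_⟩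
    simp only [Set.mem_setOf_eq, Felicitous]
    intro a a'
    rw [fel_sum_eq hu μ₀ v a a', sub_nonneg]
    exact hv.2 a a'
  have hsub2 : EnvCube Ω A ∩ {e | Felicitous μ₀ e.1 e.2}
      ⊆ (⋃ s : Ω → A, (CS s) ×ˢ (RS μ₀ s)) ∪ (TieS Ω A) ×ˢ (Set.univ : Set (A × Ω → ℝ)) := by
    rintro ⟨u, v⟩ ⟨⟨hu, hv⟩, hfel⟩
    by_cases ht : u ∈ TieS Ω A
    · exact Or.inr ⟨ht, Set.mem_univ _⟩
    · have hu' : u ∈ kube (A × Ω) := mem_kube.mpr hu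
      obtain ⟨s, hus⟩ := Set.mem_iUnion.mp (kube_diff_tieS_subset ⟨hu', ht⟩)
      refine Or.inl (Set.mem_iUnion.mpr ⟨s, hus, mem_kube.mpr hv, ?_⟩)
      intro a a'
      have h3 := hfel a a'
      rwa [fel_sum_eq hus μ₀ v a a', sub_nonneg] at h3
  have hTnull : volume ((TieS Ω A) ×ˢ (Set.univ : Set (A × Ω → ℝ))) = 0 := by
    rw [Measure.volume_eq_prod, Measure.prod_prod, tieS_null, zero_mul]
  have hkey : V = ∑ s : Ω → A, volume (CS s) * volume (RS μ₀ s) := by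
    rw [hVdef, ← hGvol]
    refine le_antisymm ?_ (measure_mono hGsub)
    calc volume (EnvCube Ω A ∩ {e | Felicitous μ₀ e.1 e.2})
        ≤ volume ((⋃ s : Ω → A, (CS s) ×ˢ (RS μ₀ s)) ∪ (TieS Ω A) ×ˢ Set.univ) :=
          measure_mono hsub2
      _ ≤ volume (⋃ s : Ω → A, (CS s) ×ˢ (RS μ₀ s)) + volume ((TieS Ω A) ×ˢ Set.univ) :=
          measure_union_le _ _
      _ = volume (⋃ s : Ω → A, (CS s) ×ˢ (RS μ₀ s)) := by rw [hTnull, add_zero]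
  have hPsum : ∑ s : Ω → A, volume (CS s) = 1 := by
    have h1 : volume (⋃ s : Ω → A, CS s) = ∑ s : Ω → A, volume (CS s) := by
      rw [measure_iUnion (fun s s' h => CS_disjoint h) fun s => measurableSet_CS s, tsum_fintype]
    rw [← h1]
    refine le_antisymm ?_ ?_
    · calc volume (⋃ s : Ω → A, CS s) ≤ volume (kube (A × Ω)) :=
            measure_mono (Set.iUnion_subset fun s => Set.inter_subset_left)
        _ = 1 := volume_kube
    · calc (1:ENNReal) = volume (kube (A × Ω)) := volume_kube.symm
        _ = volume (kube (A × Ω) \ TieS Ω A) := (measure_diff_null tieS_null).symm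
        _ ≤ volume (⋃ s : Ω → A, CS s) := measure_mono kube_diff_tieS_subset
  set good : Finset (Ω → A) := Finset.univ.filter (fun s => Function.Surjective s) with hgooddef
  set bad : Finset (Ω → A) := Finset.univ.filter (fun s => ¬ Function.Surjective s) with hbaddef
  set T := ∑ s ∈ good, volume (CS s) with hTdef
  set B := ∑ s ∈ bad, volume (CS s) with hBdef
  have hTB : T + B = 1 := by
    rw [hTdef, hBdef, hgooddef, hbaddef, Finset.sum_filter_add_sum_filter_not]
    exact hPsum
  have hT1 : T ≤ 1 := by rw [← hTB]; exact le_self_add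
  have hB1 : B ≤ 1 := by rw [← hTB]; exact le_add_self
  have hbadB : B ≤ cA * (1 - cA⁻¹) ^ Fintype.card Ω := by
    have h1 : B = volume (⋃ s ∈ bad, CS s) := by
      rw [hBdef, measure_biUnion_finset (fun s _ s' _ h => CS_disjoint h)
        fun s _ => measurableSet_CS s]
    rw [h1]
    have h2 : (⋃ s ∈ bad, CS s) ⊆ ⋃ a : A, ⋃ s ∈ {s : Ω → A | ∀ ω, s ω ≠ a}, CS s := by
      refine Set.iUnion₂_subset fun s hs => ?_
      have hns : ¬ Function.Surjective s := (Finset.mem_filter.mp hs).2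
      rw [Function.Surjective] at hns
      push_neg at hns
      obtain ⟨a, ha⟩ := hns
      exact Set.subset_iUnion_of_subset a (Set.subset_biUnion_of_mem ha)
    refine le_trans (measure_mono h2) (le_trans (measure_iUnion_le _) ?_)
    calc ∑' a : A, volume (⋃ s ∈ {s : Ω → A | ∀ ω, s ω ≠ a}, CS s)
        ≤ ∑' _a : A, (1 - cA⁻¹) ^ Fintype.card Ω := ENNReal.tsum_le_tsum fun a => vol_miss_le a
      _ = cA * (1 - cA⁻¹) ^ Fintype.card Ω := by
          rw [tsum_fintype, Finset.sum_const, Finset.card_univ, nsmul_eq_mul, hcAdef]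
  have hq_surj : ∀ s ∈ good, volume (RS μ₀ s) = κ := by
    intro s hs
    have hsurj : Function.Surjective s := (Finset.mem_filter.mp hs).2
    rw [vol_RS μ₀ hμ₀.1 s]
    have him : Finset.univ.image s = Finset.univ := by
      refine Finset.eq_univ_of_forall fun a => ?_
      obtain ⟨ω, hω⟩ := hsurj a
      exact Finset.mem_image.mpr ⟨ω, Finset.mem_univ _, hω⟩
    rw [him, Finset.card_univ, hκdef, hcAdef]
  have hq_le1 : ∀ s : Ω → A, volume (RS μ₀ s) ≤ 1 := fun s => by
    rw [vol_RS μ₀ hμ₀.1 s]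
    exact pow_le_one' hinv_le1 _
  have hsplit : V = κ * T + ∑ s ∈ bad, volume (CS s) * volume (RS μ₀ s) := by
    rw [hkey, ← Finset.sum_filter_add_sum_filter_not Finset.univ
      (fun s => Function.Surjective s) (fun s => volume (CS s) * volume (RS μ₀ s))]
    congr 1
    rw [hTdef, Finset.mul_sum]
    exact Finset.sum_congr rfl fun s hs => by rw [hq_surj s hs, mul_comm]
  have hupper : V ≤ κ * T + B := by
    rw [hsplit]
    refine add_le_add le_rfl ?_
    rw [hBdef]
    refine Finset.sum_le_sum fun s _ => ?_
    calc volume (CS s) * volume (RS μ₀ s) ≤ volume (CS s) * 1 :=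
          mul_le_mul_right (hq_le1 s) _
      _ = volume (CS s) := mul_one _
  have hlower : κ * T ≤ V := by rw [hsplit]; exact le_self_add
  have hκtop : κ ≠ ⊤ := (lt_of_le_of_lt hκle1 ENNReal.one_lt_top).ne
  have hTtop : T ≠ ⊤ := (lt_of_le_of_lt hT1 ENNReal.one_lt_top).ne
  have hBtop : B ≠ ⊤ := (lt_of_le_of_lt hB1 ENNReal.one_lt_top).ne
  have h2top : κ * T + B ≠ ⊤ :=
    ENNReal.add_ne_top.mpr ⟨ENNReal.mul_ne_top hκtop hTtop, hBtop⟩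
  have hVtop : V ≠ ⊤ := ne_top_of_le_ne_top h2top hupper
  have hx1 : κ.toReal * T.toReal ≤ V.toReal := by
    have h := ENNReal.toReal_mono hVtop hlower
    rwa [ENNReal.toReal_mul] at h
  have hx2 : V.toReal ≤ κ.toReal * T.toReal + B.toReal := by
    have h := ENNReal.toReal_mono h2top hupper
    rwa [ENNReal.toReal_add (ENNReal.mul_ne_top hκtop hTtop) hBtop, ENNReal.toReal_mul] at h
  have hTBr : T.toReal + B.toReal = 1 := by
    have h := congrArg ENNReal.toReal hTB
    rwa [ENNReal.toReal_add hTtop hBtop, ENNReal.toReal_one] at h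
  have hκr1 : κ.toReal ≤ 1 := by
    have h := ENNReal.toReal_mono ENNReal.one_ne_top hκle1
    rwa [ENNReal.toReal_one] at h
  have hBr : B.toReal ≤ (Fintype.card A : ℝ) * r ^ Fintype.card Ω := by
    have hδtop : cA * (1 - cA⁻¹) ^ Fintype.card Ω ≠ ⊤ :=
      ENNReal.mul_ne_top hcA_netop
        (lt_of_le_of_lt (pow_le_one' tsub_le_self _) ENNReal.one_lt_top).ne
    have h := ENNReal.toReal_mono hδtop hbadB
    have h5 : (cA * (1 - cA⁻¹) ^ Fintype.card Ω).toReal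
        = (Fintype.card A : ℝ) * r ^ Fintype.card Ω := by
      rw [ENNReal.toReal_mul, ENNReal.toReal_pow]
      have h6 : (1 - cA⁻¹).toReal = r := by
        rw [ENNReal.toReal_sub_of_le hinv_le1 ENNReal.one_ne_top, hrdef]
        simp [hcAdef, ENNReal.toReal_inv]
      rw [h6, hcAdef]
      simp
    rwa [h5] at h
  have hBr0 : 0 ≤ B.toReal := ENNReal.toReal_nonneg
  have hκr0 : 0 ≤ κ.toReal := ENNReal.toReal_nonneg
  have hκval : κ.toReal = 1 / (Fintype.card A : ℝ) ^ Fintype.card A := by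
    rw [hκdef, ENNReal.toReal_pow, ENNReal.toReal_inv]
    simp [hcAdef, one_div, inv_pow]
  have he1 : κ.toReal * B.toReal ≤ B.toReal := mul_le_of_le_one_left hBr0 hκr1
  have he2 : κ.toReal * T.toReal + κ.toReal * B.toReal = κ.toReal := by
    rw [← mul_add, hTBr, mul_one]
  have he3 : 0 ≤ κ.toReal * B.toReal := mul_nonneg hκr0 hBr0
  have habs : |V.toReal - κ.toReal| ≤ B.toReal := by
    rw [abs_le]
    constructor
    · linarith
    · linarith
  rw [← hκval]
  calc |V.toReal - κ.toReal| ≤ B.toReal := habs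
    _ ≤ (Fintype.card A : ℝ) * r ^ Fintype.card Ω := hBr
    _ ≤ (Fintype.card A : ℝ) * r ^ N := by
        refine mul_le_mul_of_nonneg_left ?_ hcA0.le
        exact pow_le_pow_of_le_one hr0 hr1.le hcard
    _ ≤ ε := hNval


end KL
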